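/- Let R be a commutative ring containing ℚ and consider the ring of pseudo-differential operators: formal Laurent series A = Σ_{n ≤ m} aₙ ∂ₓⁿ with aₙ ∈ R, with multiplication determined by ∂ₓᵏ ∘ f = Σ_{l≥0} [k(k-1)⋯(k-l+1)/l!] (∂ₓˡ f) ∂ₓ^{k-l} for f ∈ R (where R is a ring of functions with derivation ∂ₓ). Then for any r ≥ 2 and any pseudo-differential operator A of the form A = ∂ₓʳ + Σ_{n≥1} aₙ ∂ₓ^{r-n}, there exists a unique pseudo-differential operator B of the form B = ∂ₓ + Σ_{n≥0} bₙ ∂ₓ^{-n} such that Bʳ = A. -/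

import Mathlib

open scoped BigOperators

/-- The generalized binomial coefficient `k(k-1)⋯(k-l+1)/l!` for `k : ℤ`. -/
noncomputable def fallCoeff (k : ℤ) (l : ℕ) : ℚ :=
  (∏ i ∈ Finset.range l, ((k : ℚ) - (i : ℚ))) / (Nat.factorial l : ℚ)

/-- Coefficientwise composition of pseudo-differential operators: if
`A = Σ aₖ ∂ₓᵏ` and `B = Σ bₗ ∂ₓˡ` (with coefficient functions `A B : ℤ → R`),
then `A ∘ B = Σ_{k,l,j} aₖ (k(k-1)⋯(k-j+1)/j!) (∂ₓʲ bₗ) ∂ₓ^{k+l-j}`, whose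
coefficient at `∂ₓⁿ` is given by the following (finite) sum over `(l, j)`. -/
noncomputable def pdoMul {R : Type*} [CommRing R] [Algebra ℚ R]
    (d : Derivation ℚ R R) (A B : ℤ → R) : ℤ → R :=
  fun n => ∑ᶠ p : ℤ × ℕ,
    fallCoeff (n + (p.2 : ℤ) - p.1) p.2 •
      (A (n + (p.2 : ℤ) - p.1) * (⇑d)^[p.2] (B p.1))

/-- Powers of a pseudo-differential operator; the zeroth power is the
identity operator `1 = ∂ₓ⁰`. -/
noncomputable def pdoPow {R : Type*} [CommRing R] [Algebra ℚ R]
    (d : Derivation ℚ R R) (B : ℤ → R) : ℕ → (ℤ → R)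
  | 0 => fun n => if n = 0 then 1 else 0
  | (m + 1) => pdoMul d B (pdoPow d B m)


section Aux
variable {R : Type*} [CommRing R] [Algebra ℚ R] (d : Derivation ℚ R R)

lemma fallCoeff_zero (k : ℤ) : fallCoeff k 0 = 1 := by simp [fallCoeff]

lemma d_iter_zero (j : ℕ) : (⇑d)^[j] (0 : R) = 0 :=
  Function.iterate_fixed (map_zero d) j

lemma mul_support_finite (B C : ℤ → R) (hB : ∀ k : ℤ, 1 < k → B k = 0)
    (m : ℤ) (hC : ∀ l : ℤ, m < l → C l = 0) (n : ℤ) :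
    (Function.support fun p : ℤ × ℕ =>
      fallCoeff (n + (p.2 : ℤ) - p.1) p.2 •
        (B (n + (p.2 : ℤ) - p.1) * (⇑d)^[p.2] (C p.1))).Finite := by
  apply Set.Finite.subset
    (Set.finite_coe_iff.mp inferInstance :
      (↑(Finset.Icc (n-1) m ×ˢ Finset.range (m - n + 2).toNat) : Set (ℤ × ℕ)).Finite)
  rintro ⟨l, j⟩ hp
  simp only [Function.mem_support] at hp
  have h1 : ¬ (1 < n + (j : ℤ) - l) := by
    intro h; exact hp (by rw [hB _ h, zero_mul, smul_zero])
  have h2 : ¬ ((m : ℤ) < l) := by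
    intro h; exact hp (by rw [hC _ h, d_iter_zero, mul_zero, smul_zero])
  have hj : (0:ℤ) ≤ (j:ℤ) := Int.natCast_nonneg j
  simp only [Finset.coe_product, Set.mem_prod, Finset.mem_coe, Finset.mem_Icc,
    Finset.mem_range]
  refine ⟨⟨by omega, by omega⟩, ?_⟩
  have : (j : ℤ) < m - n + 2 := by omega
  omega

lemma pow_support (B : ℤ → R) (hB1 : B 1 = 1) (hBs : ∀ k : ℤ, 1 < k → B k = 0)
    (m : ℕ) :
    (∀ n : ℤ, (m : ℤ) < n → pdoPow d B m n = 0) ∧ pdoPow d B m (m : ℤ) = 1 := by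
  induction m with
  | zero =>
    constructor
    · intro n hn
      simp only [pdoPow, if_neg (by omega : ¬ n = 0)]
    · simp [pdoPow]
  | succ m ih =>
    have step : pdoPow d B (m+1) = pdoMul d B (pdoPow d B m) := rfl
    constructor
    · intro n hn
      rw [step]
      apply finsum_eq_zero_of_forall_eq_zero
      rintro ⟨l, j⟩
      by_cases hk : 1 < n + (j : ℤ) - l
      · rw [hBs _ hk, zero_mul, smul_zero]
      · have hj : (0:ℤ) ≤ (j:ℤ) := Int.natCast_nonneg j
        have hl : (m : ℤ) < l := by push_cast at hn ⊢; omega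
        rw [ih.1 l hl, d_iter_zero, mul_zero, smul_zero]
    · rw [step]
      show (∑ᶠ p : ℤ × ℕ, _) = 1
      rw [finsum_eq_single _ (((m : ℤ), 0) : ℤ × ℕ)]
      · simp only [Nat.cast_zero, add_zero, Function.iterate_zero, id_eq]
        push_cast
        rw [(by ring : (m:ℤ) + 1 - (m:ℤ) = 1), hB1, ih.2, fallCoeff_zero,
          one_smul, one_mul]
      · rintro ⟨l, j⟩ hne
        by_cases hk : 1 < ((m:ℕ)+1:ℤ) + (j : ℤ) - l
        · rw [hBs _ (by push_cast at hk ⊢; omega), zero_mul, smul_zero]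
        · by_cases hl : (m : ℤ) < l
          · rw [ih.1 l hl, d_iter_zero, mul_zero, smul_zero]
          · exfalso
            apply hne
            have hj : (0:ℤ) ≤ (j:ℤ) := Int.natCast_nonneg j
            push_cast at hk
            have hj0 : j = 0 := by omega
            have : l = (m:ℤ) := by omega
            simp [hj0, this]
end Aux

section Key
variable {R : Type*} [CommRing R] [Algebra ℚ R] (d : Derivation ℚ R R)

lemma key_lemma (B B' : ℤ → R) (hB1 : B 1 = 1) (hB'1 : B' 1 = 1)
    (hBs : ∀ k : ℤ, 1 < k → B k = 0) (hB's : ∀ k : ℤ, 1 < k → B' k = 0)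
    (K : ℤ) (hK : K ≤ 1) (hag : ∀ k : ℤ, K ≤ k → B k = B' k) (m : ℕ) :
    (∀ n : ℤ, K + m - 1 ≤ n → pdoPow d B m n = pdoPow d B' m n) ∧
      pdoPow d B m (K + m - 2) - pdoPow d B' m (K + m - 2)
        = (m : R) * (B (K - 1) - B' (K - 1)) := by
  induction m with
  | zero =>
    refine ⟨fun n _ => rfl, ?_⟩
    simp only [pdoPow, Nat.cast_zero, zero_mul, sub_self]
  | succ m ih =>
    have hsup := pow_support d B hB1 hBs m
    have hsup' := pow_support d B' hB'1 hB's m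
    have stepB : pdoPow d B (m+1) = pdoMul d B (pdoPow d B m) := rfl
    have stepB' : pdoPow d B' (m+1) = pdoMul d B' (pdoPow d B' m) := rfl
    constructor
    · intro n hn
      push_cast at hn
      rw [stepB, stepB']
      apply finsum_congr
      rintro ⟨l, j⟩
      have hj : (0:ℤ) ≤ (j:ℤ) := Int.natCast_nonneg j
      by_cases hk : 1 < n + (j : ℤ) - l
      · simp only [hBs _ hk, hB's _ hk, zero_mul, smul_zero]
      · by_cases hl : (m : ℤ) < l
        · simp only [hsup.1 l hl, hsup'.1 l hl, d_iter_zero, mul_zero, smul_zero]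
        · rw [hag _ (by omega), ih.1 l (by omega)]
    · rw [stepB, stepB']
      have hfin := mul_support_finite d B (pdoPow d B m) hBs (m:ℤ) hsup.1
        (K + (m+1 : ℕ) - 2)
      have hfin' := mul_support_finite d B' (pdoPow d B' m) hB's (m:ℤ) hsup'.1
        (K + (m+1 : ℕ) - 2)
      rw [show pdoMul d B (pdoPow d B m) (K + (m+1:ℕ) - 2)
            - pdoMul d B' (pdoPow d B' m) (K + (m+1:ℕ) - 2)
          = ∑ᶠ p : ℤ × ℕ,
            (fallCoeff ((K + (m+1:ℕ) - 2) + (p.2 : ℤ) - p.1) p.2 •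
              (B ((K + (m+1:ℕ) - 2) + (p.2 : ℤ) - p.1) * (⇑d)^[p.2] (pdoPow d B m p.1))
            - fallCoeff ((K + (m+1:ℕ) - 2) + (p.2 : ℤ) - p.1) p.2 •
              (B' ((K + (m+1:ℕ) - 2) + (p.2 : ℤ) - p.1) * (⇑d)^[p.2] (pdoPow d B' m p.1)))
          from (finsum_sub_distrib hfin hfin').symm]
      set n : ℤ := K + (m+1:ℕ) - 2 with hn
      have hnm : n = K + m - 1 := by push_cast [hn]; ring
      set p₁ : ℤ × ℕ := ((m:ℤ), 0) with hp₁
      set p₂ : ℤ × ℕ := (K + (m:ℤ) - 2, 0) with hp₂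
      have hp12 : p₁ ≠ p₂ := by
        simp only [hp₁, hp₂, Prod.mk.injEq, ne_eq]
        intro h
        omega
      rw [finsum_eq_sum_of_support_subset _
        (s := ({p₁, p₂} : Finset (ℤ × ℕ)))]
      · rw [Finset.sum_pair hp12]
        have e₁ : n + ((0:ℕ):ℤ) - (m:ℤ) = K - 1 := by push_cast; omega
        have e₂ : n + ((0:ℕ):ℤ) - (K + (m:ℤ) - 2) = 1 := by push_cast; omega
        simp only [hp₁, hp₂, Function.iterate_zero, id_eq, e₁, e₂, fallCoeff_zero,
          one_smul]
        rw [hsup.2, hsup'.2, mul_one, mul_one, hB1, hB'1, one_mul, one_mul]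
        have e₃ : K + (m:ℤ) - 2 = K + ((m:ℕ):ℤ) - 2 := by norm_num
        rw [e₃, ih.2]
        push_cast
        ring
      · rintro ⟨l, j⟩ hp
        simp only [Function.mem_support] at hp
        have hj : (0:ℤ) ≤ (j:ℤ) := Int.natCast_nonneg j
        simp only [Finset.coe_insert, Finset.coe_singleton, Set.mem_insert_iff,
          Set.mem_singleton_iff]
        by_cases hk : 1 < n + (j : ℤ) - l
        · exfalso
          apply hp
          simp only [hBs _ hk, hB's _ hk, zero_mul, smul_zero, sub_self]
        · by_cases hl : (m : ℤ) < l
          · exfalso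
            apply hp
            simp only [hsup.1 l hl, hsup'.1 l hl, d_iter_zero, mul_zero, smul_zero,
              sub_self]
          · by_cases hkK : K ≤ n + (j : ℤ) - l
            · by_cases hlK : K + (m:ℤ) - 1 ≤ l
              · exfalso
                apply hp
                rw [hag _ hkK, ih.1 l (by omega), sub_self]
              · right
                have hj0 : j = 0 := by omega
                have hl2 : l = K + (m:ℤ) - 2 := by omega
                simp [hp₂, hj0, hl2]
            · left
              have hj0 : j = 0 := by omega
              have hlm : l = (m:ℤ) := by omega
              simp [hp₁, hj0, hlm]
end Key

section Main
variable {R : Type*} [CommRing R] [Algebra ℚ R]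

/-- Truncated coefficient function built from the first `t` root coefficients. -/
noncomputable def truncRoot (β : ℕ → R) (t : ℕ) : ℤ → R := fun k =>
  if k = 1 then 1 else if 1 - (t : ℤ) ≤ k ∧ k ≤ 0 then β (-k).toNat else 0

/-- Recursive construction of root coefficients: `rootAux d r A t s` is the
`s`-th coefficient after `t` stages. -/
noncomputable def rootAux (d : Derivation ℚ R R) (r : ℕ) (A : ℤ → R) :
    ℕ → ℕ → R
  | 0 => fun _ => 0
  | (t + 1) => fun s =>
      if s = t then
        ((r : ℚ)⁻¹) • (A ((r : ℤ) - t - 1)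
          - pdoPow d (truncRoot (rootAux d r A t) t) r ((r : ℤ) - t - 1))
      else rootAux d r A t s

noncomputable def rootβ (d : Derivation ℚ R R) (r : ℕ) (A : ℤ → R) : ℕ → R :=
  fun t => rootAux d r A (t + 1) t

lemma rootAux_stable (d : Derivation ℚ R R) (r : ℕ) (A : ℤ → R) :
    ∀ t s : ℕ, s < t → rootAux d r A t s = rootβ d r A s := by
  intro t
  induction t with
  | zero => intro s hs; omega
  | succ t ih =>
    intro s hs
    by_cases h : s = t
    · subst h; rfl
    · have : s < t := by omega
      show (if s = t then _ else rootAux d r A t s) = _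
      rw [if_neg h, ih s this]

lemma truncRoot_stable (d : Derivation ℚ R R) (r : ℕ) (A : ℤ → R) (t : ℕ) :
    truncRoot (rootAux d r A t) t = truncRoot (rootβ d r A) t := by
  funext k
  unfold truncRoot
  by_cases h1 : k = 1
  · simp [h1]
  · rw [if_neg h1, if_neg h1]
    by_cases h2 : 1 - (t : ℤ) ≤ k ∧ k ≤ 0
    · rw [if_pos h2, if_pos h2]
      have hnk : ((-k).toNat : ℤ) = -k := Int.toNat_of_nonneg (by omega)
      exact rootAux_stable d r A t (-k).toNat (by omega)
    · rw [if_neg h2, if_neg h2]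

lemma rootβ_spec (d : Derivation ℚ R R) (r : ℕ) (A : ℤ → R) (t : ℕ) :
    rootβ d r A t = ((r : ℚ)⁻¹) • (A ((r : ℤ) - t - 1)
      - pdoPow d (truncRoot (rootβ d r A) t) r ((r : ℤ) - t - 1)) := by
  show (if t = t then _ else _) = _
  rw [if_pos rfl, truncRoot_stable]
end Main

section Main2
variable {R : Type*} [CommRing R] [Algebra ℚ R]

lemma nat_mul_smul_inv (r : ℕ) (hr : r ≠ 0) (y : R) :
    (r : R) * ((r : ℚ)⁻¹ • y) = y := by
  rw [← nsmul_eq_mul, ← Nat.cast_smul_eq_nsmul ℚ, smul_smul,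
    mul_inv_cancel₀ (by exact_mod_cast hr), one_smul]

lemma nat_mul_eq_zero (r : ℕ) (hr : r ≠ 0) (x : R) (h : (r : R) * x = 0) :
    x = 0 := by
  have h2 : (r : ℚ) • x = 0 := by
    rw [Nat.cast_smul_eq_nsmul ℚ, nsmul_eq_mul]; exact h
  calc x = (r : ℚ)⁻¹ • ((r : ℚ) • x) := by
        rw [smul_smul, inv_mul_cancel₀ (by exact_mod_cast hr), one_smul]
    _ = 0 := by rw [h2, smul_zero]

lemma solutions_eq (d : Derivation ℚ R R) (r : ℕ) (hr : 2 ≤ r) (A : ℤ → R)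
    (B B' : ℤ → R) (hB1 : B 1 = 1) (hBs : ∀ n : ℤ, 1 < n → B n = 0)
    (hBp : pdoPow d B r = A)
    (hB'1 : B' 1 = 1) (hB's : ∀ n : ℤ, 1 < n → B' n = 0)
    (hB'p : pdoPow d B' r = A) : B = B' := by
  have main : ∀ t : ℕ, ∀ k : ℤ, 1 - (t : ℤ) ≤ k → B k = B' k := by
    intro t
    induction t with
    | zero =>
      intro k hk
      simp only [Nat.cast_zero, sub_zero] at hk
      rcases eq_or_lt_of_le hk with h | h
      · rw [← h, hB1, hB'1]
      · rw [hBs _ h, hB's _ h]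
    | succ t ih =>
      intro k hk
      by_cases h : 1 - (t : ℤ) ≤ k
      · exact ih k h
      · have hkt : k = -(t : ℤ) := by push_cast at hk; omega
        subst hkt
        have KL := (key_lemma d B B' hB1 hB'1 hBs hB's (1 - (t : ℤ))
          (by omega) ih r).2
        rw [hBp, hB'p, sub_self] at KL
        have := nat_mul_eq_zero r (by omega) _ KL.symm
        have h2 : B (1 - (t:ℤ) - 1) = B' (1 - (t:ℤ) - 1) := by
          have := sub_eq_zero.mp this
          exact this
        rw [show -(t:ℤ) = 1 - (t:ℤ) - 1 by ring]
        exact h2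
  funext k
  by_cases h : 1 ≤ k
  · exact main 0 k (by push_cast; omega)
  · exact main (1 - k).toNat k (by
      have : ((1 - k).toNat : ℤ) = 1 - k := Int.toNat_of_nonneg (by omega)
      omega)
end Main2

section Main3
variable {R : Type*} [CommRing R] [Algebra ℚ R]

lemma exists_root (d : Derivation ℚ R R) (r : ℕ) (hr : 2 ≤ r) (A : ℤ → R)
    (hlead : A (r : ℤ) = 1) (hbound : ∀ n : ℤ, (r : ℤ) < n → A n = 0) :
    ∃ B : ℤ → R, B 1 = 1 ∧ (∀ n : ℤ, 1 < n → B n = 0) ∧ pdoPow d B r = A := by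
  set β : ℕ → R := rootβ d r A with hβ
  set B : ℤ → R := fun k =>
    if k = 1 then 1 else if k ≤ 0 then β (-k).toNat else 0 with hB
  have hB1 : B 1 = 1 := by simp [hB]
  have hBs : ∀ n : ℤ, 1 < n → B n = 0 := by
    intro n hn
    simp only [hB]
    rw [if_neg (by omega), if_neg (by omega)]
  refine ⟨B, hB1, hBs, ?_⟩
  have hsup := pow_support d B hB1 hBs r
  funext n
  rcases lt_trichotomy n (r : ℤ) with h | h | h
  · -- n < r : use the recursion
    set t : ℕ := ((r : ℤ) - 1 - n).toNat with hts
    have ht : (t : ℤ) = (r : ℤ) - 1 - n := Int.toNat_of_nonneg (by omega)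
    have htr1 : truncRoot β t 1 = 1 := by simp [truncRoot]
    have htrs : ∀ k : ℤ, 1 < k → truncRoot β t k = 0 := by
      intro k hk
      unfold truncRoot
      rw [if_neg (by omega), if_neg (by omega)]
    have hag : ∀ k : ℤ, 1 - (t : ℤ) ≤ k → B k = truncRoot β t k := by
      intro k hk
      simp only [hB]
      unfold truncRoot
      by_cases h1 : k = 1
      · simp [h1]
      · rw [if_neg h1, if_neg h1]
        by_cases h2 : k ≤ 0
        · rw [if_pos h2, if_pos ⟨hk, h2⟩]
        · rw [if_neg h2, if_neg (by omega)]
    have KL := (key_lemma d B (truncRoot β t) hB1 htr1 hBs htrs (1 - (t : ℤ))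
      (by omega) hag r).2
    have hidx : 1 - (t : ℤ) + (r : ℤ) - 2 = n := by omega
    rw [hidx] at KL
    have hBt : B (1 - (t : ℤ) - 1) = β t := by
      simp only [hB]
      rw [if_neg (by omega), if_pos (by omega)]
      congr 1
      omega
    have hTt : truncRoot β t (1 - (t : ℤ) - 1) = 0 := by
      unfold truncRoot
      rw [if_neg (by omega), if_neg (by omega)]
    rw [hBt, hTt, sub_zero] at KL
    have hspec := rootβ_spec d r A t
    have hn' : (r : ℤ) - t - 1 = n := by omega
    rw [hn'] at hspec
    rw [← hβ] at hspec
    rw [hspec, nat_mul_smul_inv r (by omega)] at KL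
    exact sub_left_inj.mp KL
  · rw [h, hsup.2, hlead]
  · rw [hsup.1 n h, hbound n h]
end Main3

/-- Existence and uniqueness of the r-th root of a pseudo-differential
operator of the form `A = ∂ₓʳ + Σ_{n≥1} aₙ ∂ₓ^{r-n}`: there is a unique
`B = ∂ₓ + Σ_{n≥0} bₙ ∂ₓ^{-n}` with `Bʳ = A`. -/
theorem stmt_6 {R : Type*} [CommRing R] [Algebra ℚ R] (d : Derivation ℚ R R)
    (r : ℕ) (hr : 2 ≤ r) (A : ℤ → R)
    (hlead : A (r : ℤ) = 1) (hbound : ∀ n : ℤ, (r : ℤ) < n → A n = 0) :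
    ∃! B : ℤ → R, B 1 = 1 ∧ (∀ n : ℤ, 1 < n → B n = 0) ∧ pdoPow d B r = A := by
  obtain ⟨B, h1, h2, h3⟩ := exists_root d r hr A hlead hbound
  exact ⟨B, ⟨h1, h2, h3⟩, fun y hy =>
    solutions_eq d r hr A y B hy.1 hy.2.1 hy.2.2 h1 h2 h3⟩
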